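/- Let p be a probability distribution on a finite product space with tree graph G=(V,E), and x a fixed assignment. Then I(x;μ) = Σ_u α_u p(u), where α_u = Σᵢ 1[uᵢ=xᵢ] − Σ_{(i,j)∈E} 1[uᵢ=xᵢ ∨ uⱼ=xⱼ] and I(x;μ) = Σᵢ(1−dᵢ)μᵢ(xᵢ) + Σ_{(i,j)∈E} μᵢⱼ(xᵢ,xⱼ). -/

import Mathlib

open Finset

lemma edge_card_eq_degree {n : ℕ} (G : SimpleGraph (Fin n)) [DecidableRel G.Adj] (i : Fin n) :
    ((univ.filter (fun e : Fin n × Fin n => e.1 < e.2 ∧ G.Adj e.1 e.2)).filter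
      (fun e => e.1 = i ∨ e.2 = i)).card = G.degree i := by
  rw [SimpleGraph.degree]
  apply Finset.card_nbij' (fun e => if e.1 = i then e.2 else e.1)
    (fun j => if i < j then (i, j) else (j, i))
  · intro e he
    simp only [mem_coe, mem_filter, mem_univ, true_and] at he
    obtain ⟨⟨hlt, hadj⟩, hor⟩ := he
    rcases hor with h | h
    · subst h
      simp [SimpleGraph.mem_neighborFinset, hadj]
    · subst h
      have h1 : e.1 ≠ e.2 := ne_of_lt hlt
      simp [h1, SimpleGraph.mem_neighborFinset, hadj.symm]
  · intro j hj
    rw [mem_coe, SimpleGraph.mem_neighborFinset] at hj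
    by_cases h : i < j
    · simp [h, hj]
    · have : j < i := lt_of_le_of_ne (not_lt.mp h) hj.ne'
      simp [h, this, hj.symm]
  · intro e he
    simp only [mem_coe, mem_filter, mem_univ, true_and] at he
    obtain ⟨⟨hlt, hadj⟩, hor⟩ := he
    rcases hor with h | h
    · subst h
      simp [hlt]
    · subst h
      have h1 : e.1 ≠ e.2 := ne_of_lt hlt
      simp [h1, not_lt.mpr hlt.le, ne_of_lt hlt]
  · intro j hj
    rw [mem_coe, SimpleGraph.mem_neighborFinset] at hj
    by_cases h : i < j
    · simp [h]
    · have : j < i := lt_of_le_of_ne (not_lt.mp h) hj.ne'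
      simp [h, this.ne]

lemma deg_sum {n : ℕ} (G : SimpleGraph (Fin n)) [DecidableRel G.Adj] (a : Fin n → ℝ) :
    ∑ i, (G.degree i : ℝ) * a i
      = ∑ e ∈ univ.filter (fun e : Fin n × Fin n => e.1 < e.2 ∧ G.Adj e.1 e.2), (a e.1 + a e.2) := by
  set E := univ.filter (fun e : Fin n × Fin n => e.1 < e.2 ∧ G.Adj e.1 e.2) with hE
  have h1 : ∀ e ∈ E, a e.1 + a e.2 = ∑ i, if e.1 = i ∨ e.2 = i then a i else 0 := by
    intro e he
    simp only [hE, mem_filter, mem_univ, true_and] at he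
    have hne : e.1 ≠ e.2 := ne_of_lt he.1
    rw [← Finset.sum_filter]
    have : (univ.filter (fun i => e.1 = i ∨ e.2 = i)) = {e.1, e.2} := by
      ext i; simp [eq_comm, or_comm]
    rw [this, Finset.sum_pair hne]
  rw [Finset.sum_congr rfl h1, Finset.sum_comm]
  refine Finset.sum_congr rfl fun i _ => ?_
  rw [← Finset.sum_filter, Finset.sum_const, nsmul_eq_mul]
  rw [edge_card_eq_degree G i, mul_comm]

/-- `I(x;μ) = Σ_u α_u p(u)` where `α_u = Σᵢ 1[uᵢ=xᵢ] − Σ_{(i,j)∈E} 1[uᵢ=xᵢ ∨ uⱼ=xⱼ]`. -/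
theorem stmt3 {n : ℕ} {X : Fin n → Type*} [∀ i, Fintype (X i)] [∀ i, Nonempty (X i)]
    [∀ i, DecidableEq (X i)]
    (p : (∀ i, X i) → ℝ) (hp0 : ∀ z, 0 ≤ p z) (hp1 : ∑ z, p z = 1)
    (G : SimpleGraph (Fin n)) [DecidableRel G.Adj] (hG : G.IsTree)
    (x : ∀ i, X i) :
    (∑ i, (1 - (G.degree i : ℝ)) * (∑ z, if z i = x i then p z else 0))
      + (∑ e ∈ Finset.univ.filter (fun e : Fin n × Fin n => e.1 < e.2 ∧ G.Adj e.1 e.2),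
          ∑ z, if z e.1 = x e.1 ∧ z e.2 = x e.2 then p z else 0)
    = ∑ u : ∀ i, X i,
        (((Finset.univ.filter (fun i => u i = x i)).card : ℝ)
          - ((Finset.univ.filter (fun e : Fin n × Fin n =>
                e.1 < e.2 ∧ G.Adj e.1 e.2 ∧ (u e.1 = x e.1 ∨ u e.2 = x e.2))).card : ℝ))
          * p u := by
  set E := univ.filter (fun e : Fin n × Fin n => e.1 < e.2 ∧ G.Adj e.1 e.2) with hE
  -- indicator
  have hsum1 : (∑ i, (1 - (G.degree i : ℝ)) * (∑ z, if z i = x i then p z else 0))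
      = ∑ u : ∀ i, X i, ∑ i, (1 - (G.degree i : ℝ)) * (if u i = x i then (1:ℝ) else 0) * p u := by
    simp_rw [Finset.mul_sum]
    rw [Finset.sum_comm]
    refine Finset.sum_congr rfl fun u _ => Finset.sum_congr rfl fun i _ => ?_
    by_cases h : u i = x i <;> simp [h]
  have hsum2 : (∑ e ∈ E, ∑ z, if z e.1 = x e.1 ∧ z e.2 = x e.2 then p z else 0)
      = ∑ u : ∀ i, X i, ∑ e ∈ E,
          (if u e.1 = x e.1 then (1:ℝ) else 0) * (if u e.2 = x e.2 then (1:ℝ) else 0) * p u := by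
    rw [Finset.sum_comm]
    refine Finset.sum_congr rfl fun u _ => Finset.sum_congr rfl fun e _ => ?_
    by_cases h1 : u e.1 = x e.1 <;> by_cases h2 : u e.2 = x e.2 <;> simp [h1, h2]
  rw [hsum1, hsum2, ← Finset.sum_add_distrib]
  refine Finset.sum_congr rfl fun u _ => ?_
  set b : Fin n → ℝ := fun i => if u i = x i then (1:ℝ) else 0 with hb
  have hcard1 : ((univ.filter (fun i => u i = x i)).card : ℝ) = ∑ i, b i := by
    rw [← Finset.sum_filter]
    simp
  have hcard2 : ((univ.filter (fun e : Fin n × Fin n =>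
        e.1 < e.2 ∧ G.Adj e.1 e.2 ∧ (u e.1 = x e.1 ∨ u e.2 = x e.2))).card : ℝ)
      = ∑ e ∈ E, (b e.1 + b e.2 - b e.1 * b e.2) := by
    have hfe : (univ.filter (fun e : Fin n × Fin n =>
        e.1 < e.2 ∧ G.Adj e.1 e.2 ∧ (u e.1 = x e.1 ∨ u e.2 = x e.2)))
        = E.filter (fun e => u e.1 = x e.1 ∨ u e.2 = x e.2) := by
      rw [hE, Finset.filter_filter]
      simp [and_assoc]
    rw [hfe]
    rw [Finset.card_filter, Nat.cast_sum]
    refine Finset.sum_congr rfl fun e _ => ?_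
    by_cases h1 : u e.1 = x e.1 <;> by_cases h2 : u e.2 = x e.2 <;> simp [hb, h1, h2]
  rw [hcard1, hcard2]
  have key : ∑ i, (G.degree i : ℝ) * b i * p u = ∑ e ∈ E, (b e.1 * p u + b e.2 * p u) := by
    simpa [mul_assoc] using deg_sum G (fun i => b i * p u)
  rw [sub_mul, Finset.sum_mul, Finset.sum_mul]
  simp_rw [sub_mul, add_mul, one_mul]
  rw [Finset.sum_sub_distrib, Finset.sum_sub_distrib, Finset.sum_add_distrib]
  simp only [show ∀ i, (if u i = x i then (1:ℝ) else 0) = b i from fun i => rfl]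
  rw [key, Finset.sum_add_distrib]
  simp only [mul_assoc]
  ring
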